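/- A non-self-overlapping binary string of length n (one whose only autocorrelation is the trivial one) has expected wait time exactly 2^n, and this is the minimum expected wait time among all binary strings of length n. -/

import Mathlib

/-- Extend a finite binary string (`true` = heads, `false` = tails) to an
infinite sequence by padding with `false`. -/
def padFalse {i : ℕ} (v : Fin i → Bool) : ℕ → Bool :=
  fun n => if h : n < i then v ⟨n, h⟩ else false

/-- The pattern `w` occurs in the flip sequence `s` (flip `m` is `s (m-1)`)
as a consecutive substring ending at flip `m`. -/
def OccursEndingAt (w : List Bool) (s : ℕ → Bool) (m : ℕ) : Prop :=
  w.length ≤ m ∧ ∀ j : Fin w.length, s (m - w.length + (j : ℕ)) = w.get j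

/-- The first occurrence of `w` in `s` ends exactly at flip `m`. -/
def FirstOccurEndsAt (w : List Bool) (s : ℕ → Bool) (m : ℕ) : Prop :=
  OccursEndingAt w s m ∧ ∀ k < m, ¬ OccursEndingAt w s k

/-- The number of binary strings of length `i` that end with `w` and contain
no other occurrence of `w` (`w`-first-timers of length `i`). -/
noncomputable def firstTimerCount (w : List Bool) (i : ℕ) : ℕ :=
  Nat.card {v : Fin i → Bool // FirstOccurEndsAt w (padFalse v) i}

/-- The probability that `w` first appears at exactly the `i`-th fair coin flip. -/
noncomputable def firstTimeProb (w : List Bool) (i : ℕ) : ℝ :=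
  (firstTimerCount w i : ℝ) / 2 ^ i

/-- The expected number of fair coin flips until `w` first appears. -/
noncomputable def expectedWaitTime (w : List Bool) : ℝ :=
  ∑' i : ℕ, (i : ℝ) * firstTimeProb w i

namespace EWT

instance decOcc (w : List Bool) (s : ℕ → Bool) (m : ℕ) : Decidable (OccursEndingAt w s m) := by
  unfold OccursEndingAt; infer_instance

instance decFirst (w : List Bool) (s : ℕ → Bool) (m : ℕ) : Decidable (FirstOccurEndsAt w s m) := by
  unfold FirstOccurEndsAt; infer_instance

/-- number of strings of length i with no occurrence of w ending at k ≤ i -/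
noncomputable def noOcc (w : List Bool) (i : ℕ) : ℕ :=
  Nat.card {v : Fin i → Bool // ∀ k ≤ i, ¬ OccursEndingAt w (padFalse v) k}

lemma occ_congr {w : List Bool} {s t : ℕ → Bool} {m : ℕ} (h : ∀ k < m, s k = t k) :
    OccursEndingAt w s m ↔ OccursEndingAt w t m := by
  unfold OccursEndingAt
  refine and_congr_right fun hm => forall_congr' fun j => ?_
  rw [h]
  calc m - w.length + (j : ℕ) < m - w.length + w.length := by
        exact Nat.add_lt_add_left j.isLt _
    _ = m := Nat.sub_add_cancel hm

lemma padFalse_lt {i : ℕ} (v : Fin i → Bool) {k : ℕ} (h : k < i) :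
    padFalse v k = v ⟨k, h⟩ := by simp [padFalse, h]

lemma noOcc_zero (w : List Bool) (hne : w ≠ []) : noOcc w 0 = 1 := by
  have : ∀ v : Fin 0 → Bool, ∀ k ≤ 0, ¬ OccursEndingAt w (padFalse v) k := by
    intro v k hk hocc
    have h1 := hocc.1
    have : w.length ≠ 0 := fun h => hne (List.length_eq_zero_iff.mp h)
    omega
  rw [noOcc, Nat.card_eq_fintype_card]
  rw [Fintype.card_eq_one_iff]
  exact ⟨⟨fun t => t.elim0, this _⟩, fun b => Subtype.ext (funext fun t => t.elim0)⟩

lemma firstTimerCount_eq_zero (w : List Bool) {i : ℕ} (h : i < w.length) :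
    firstTimerCount w i = 0 := by
  have : IsEmpty {v : Fin i → Bool // FirstOccurEndsAt w (padFalse v) i} := by
    constructor
    rintro ⟨v, ⟨⟨hlen, -⟩, -⟩⟩
    omega
  exact Nat.card_of_isEmpty

end EWT

namespace EWT

lemma occ_restrict {w : List Bool} {i j : ℕ} (v : Fin i → Bool) (u : Fin j → Bool)
    (hj : j ≤ i) (hagree : ∀ k (hk : k < j), v ⟨k, lt_of_lt_of_le hk hj⟩ = u ⟨k, hk⟩)
    {m : ℕ} (hm : m ≤ j) :
    OccursEndingAt w (padFalse v) m ↔ OccursEndingAt w (padFalse u) m := by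
  refine occ_congr fun k hk => ?_
  have hkj : k < j := lt_of_lt_of_le hk hm
  rw [padFalse_lt v (lt_of_lt_of_le hkj hj), padFalse_lt u hkj, hagree k hkj]

lemma card_rec (w : List Bool) (i : ℕ) :
    2 * noOcc w i = noOcc w (i + 1) + firstTimerCount w (i + 1) := by
  classical
  set P : (Fin (i+1) → Bool) → Prop := fun v => ∀ k ≤ i, ¬ OccursEndingAt w (padFalse v) k with hP
  -- restriction iff
  have key : ∀ (v : Fin (i+1) → Bool) (m : ℕ), m ≤ i →
      (OccursEndingAt w (padFalse v) m ↔ OccursEndingAt w (padFalse (Fin.init v)) m) := by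
    intro v m hm
    exact occ_restrict v (Fin.init v) (Nat.le_succ i)
      (fun k hk => by rw [Fin.init]; congr 1) hm
  have keysnoc : ∀ (u : Fin i → Bool) (b : Bool) (m : ℕ), m ≤ i →
      (OccursEndingAt w (padFalse (Fin.snoc u b : Fin (i+1) → Bool)) m ↔
        OccursEndingAt w (padFalse u) m) := by
    intro u b m hm
    refine occ_restrict _ u (Nat.le_succ i) (fun k hk => ?_) hm
    have : (⟨k, lt_of_lt_of_le hk (Nat.le_succ i)⟩ : Fin (i+1)) = Fin.castSucc ⟨k, hk⟩ := rfl
    rw [this, Fin.snoc_castSucc]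
  -- first equiv : {v // P v} ≃ {u // noocc} × Bool
  have e1 : {v : Fin (i+1) → Bool // P v} ≃
      {u : Fin i → Bool // ∀ k ≤ i, ¬ OccursEndingAt w (padFalse u) k} × Bool :=
    { toFun := fun v => (⟨Fin.init v.1, fun k hk hocc => v.2 k hk (((key v.1 k hk)).mpr hocc)⟩,
        v.1 (Fin.last i))
      invFun := fun ub => ⟨Fin.snoc ub.1.1 ub.2,
        fun k hk hocc => ub.1.2 k hk ((keysnoc ub.1.1 ub.2 k hk).mp hocc)⟩
      left_inv := fun v => Subtype.ext (Fin.snoc_init_self v.1)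
      right_inv := fun ub => by
        ext : 1
        · exact Subtype.ext (by simp)
        · simp }
  -- split {v // P v} by occurrence at i+1
  have e2 : {v : Fin (i+1) → Bool // P v} ≃
      {v : Fin (i+1) → Bool // P v ∧ ¬ OccursEndingAt w (padFalse v) (i+1)} ⊕
      {v : Fin (i+1) → Bool // P v ∧ OccursEndingAt w (padFalse v) (i+1)} := by
    refine (Equiv.sumCompl (fun x : {v : Fin (i+1) → Bool // P v} =>
      OccursEndingAt w (padFalse x.1) (i+1))).symm.trans (Equiv.sumComm _ _ |>.trans ?_)
    exact Equiv.sumCongr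
      (Equiv.subtypeSubtypeEquivSubtypeInter P (fun v => ¬ OccursEndingAt w (padFalse v) (i+1)))
      (Equiv.subtypeSubtypeEquivSubtypeInter P (fun v => OccursEndingAt w (padFalse v) (i+1)))
  have e3 : {v : Fin (i+1) → Bool // P v ∧ ¬ OccursEndingAt w (padFalse v) (i+1)} ≃
      {v : Fin (i+1) → Bool // ∀ k ≤ i + 1, ¬ OccursEndingAt w (padFalse v) k} := by
    refine Equiv.subtypeEquivRight fun v => ?_
    constructor
    · rintro ⟨h1, h2⟩ k hk
      rcases Nat.lt_or_ge k (i+1) with h | h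
      · exact h1 k (Nat.lt_succ_iff.mp h)
      · have : k = i + 1 := le_antisymm hk h
        rw [this]; exact h2
    · intro h
      exact ⟨fun k hk => h k (le_trans hk (Nat.le_succ i)), h (i+1) le_rfl⟩
  have e4 : {v : Fin (i+1) → Bool // P v ∧ OccursEndingAt w (padFalse v) (i+1)} ≃
      {v : Fin (i+1) → Bool // FirstOccurEndsAt w (padFalse v) (i+1)} := by
    refine Equiv.subtypeEquivRight fun v => ?_
    unfold FirstOccurEndsAt
    constructor
    · rintro ⟨h1, h2⟩
      exact ⟨h2, fun k hk => h1 k (Nat.lt_succ_iff.mp hk)⟩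
    · rintro ⟨h1, h2⟩
      exact ⟨fun k hk => h2 k (Nat.lt_succ_iff.mpr hk), h1⟩
  have c1 : Nat.card {v : Fin (i+1) → Bool // P v} = 2 * noOcc w i := by
    rw [Nat.card_congr e1, Nat.card_prod, noOcc]
    simp [Nat.card_eq_fintype_card, Nat.mul_comm]
  have c2 : Nat.card {v : Fin (i+1) → Bool // P v} =
      noOcc w (i+1) + firstTimerCount w (i+1) := by
    rw [Nat.card_congr (e2.trans (Equiv.sumCongr e3 e4)), Nat.card_sum, noOcc, firstTimerCount]
  rw [← c1, c2]

end EWT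

namespace EWT

lemma noOcc_decay (w : List Bool) (i : ℕ) :
    noOcc w (i + w.length) ≤ noOcc w i * (2 ^ w.length - 1) := by
  classical
  set n := w.length with hn
  have hcard : Nat.card {z : Fin n → Bool // z ≠ fun j => w.get j} = 2 ^ n - 1 := by
    rw [Nat.card_eq_fintype_card, Fintype.card_subtype_compl]
    simp [Fintype.card_fun]
  set f : {v : Fin (i+n) → Bool // ∀ k ≤ i + n, ¬ OccursEndingAt w (padFalse v) k} →
      {u : Fin i → Bool // ∀ k ≤ i, ¬ OccursEndingAt w (padFalse u) k} ×
      {z : Fin n → Bool // z ≠ fun j => w.get j} := fun v =>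
    (⟨fun t => v.1 ⟨t.1, lt_of_lt_of_le t.2 (Nat.le_add_right i n)⟩, by
      intro k hk hocc
      refine v.2 k (le_trans hk (Nat.le_add_right i n)) ?_
      exact (occ_restrict v.1 _ (Nat.le_add_right i n) (fun k hk => rfl) hk).mpr hocc⟩,
     ⟨fun l => v.1 ⟨i + l.1, by omega⟩, by
      intro hz
      refine v.2 (i + n) le_rfl ⟨Nat.le_add_left n i, fun l => ?_⟩
      have hidx : i + n - n + (l : ℕ) = i + l.1 := by omega
      rw [hidx, padFalse_lt v.1 (by omega : i + l.1 < i + n)]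
      exact congrFun hz l⟩)
  have hinj : Function.Injective f := by
    rintro ⟨v, hv⟩ ⟨v', hv'⟩ h
    have h1 := congrArg (fun x => x.1.1) h
    have h2 := congrArg (fun x => x.2.1) h
    simp only [f] at h1 h2
    refine Subtype.ext (funext fun t => ?_)
    rcases Nat.lt_or_ge t.1 i with ht | ht
    · have := congrFun h1 ⟨t.1, ht⟩
      simpa [Fin.eta] using this
    · have hl : t.1 - i < n := by omega
      have := congrFun h2 ⟨t.1 - i, hl⟩
      simp only at this
      have he : (⟨i + (t.1 - i), by omega⟩ : Fin (i + n)) = t := by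
        apply Fin.ext; simp only [Fin.val_mk]; omega
      rwa [he] at this
  calc noOcc w (i + n) ≤ Nat.card ({u : Fin i → Bool // ∀ k ≤ i, ¬ OccursEndingAt w (padFalse u) k} ×
      {z : Fin n → Bool // z ≠ fun j => w.get j}) := Nat.card_le_card_of_injective f hinj
    _ = noOcc w i * (2 ^ n - 1) := by rw [Nat.card_prod, hcard, noOcc]

end EWT

namespace EWT

section KeyLemma

variable (w : List Bool) (j : ℕ)

/-- restriction map from first-timers of length `j + n` to `w`-free strings of length `j` -/
noncomputable def resMap (hw1 : 1 ≤ w.length) :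
    {v : Fin (j + w.length) → Bool // FirstOccurEndsAt w (padFalse v) (j + w.length)} →
    {u : Fin j → Bool // ∀ k ≤ j, ¬ OccursEndingAt w (padFalse u) k} := fun v =>
  ⟨fun t => v.1 ⟨t.1, lt_of_lt_of_le t.2 (Nat.le_add_right j w.length)⟩, by
    intro k hk hocc
    refine v.2.2 k (by omega : k < j + w.length) ?_
    exact (occ_restrict v.1 _ (Nat.le_add_right j w.length) (fun k hk => rfl) hk).mpr hocc⟩

lemma resMap_inj (hw1 : 1 ≤ w.length) : Function.Injective (resMap w j hw1) := by
  rintro ⟨v, hv⟩ ⟨v', hv'⟩ h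
  have h1 := congrArg (fun x => x.1) h
  simp only [resMap] at h1
  refine Subtype.ext (funext fun t => ?_)
  rcases Nat.lt_or_ge t.1 j with ht | ht
  · have := congrFun h1 ⟨t.1, ht⟩
    simpa [Fin.eta] using this
  · -- last block is forced to be w for both
    have hl : t.1 - j < w.length := by omega
    have e1 := hv.1.2 ⟨t.1 - j, hl⟩
    have e2 := hv'.1.2 ⟨t.1 - j, hl⟩
    have hidx : j + w.length - w.length + (t.1 - j) = t.1 := by omega
    rw [hidx, padFalse_lt v t.2] at e1
    rw [hidx, padFalse_lt v' t.2] at e2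
    rw [Fin.eta] at e1 e2
    show v t = v' t
    rw [e1, e2]

lemma resMap_surj (hw1 : 1 ≤ w.length)
    (hnso : ∀ d, 1 ≤ d → d ≤ w.length - 1 → List.drop d w ≠ List.take (w.length - d) w) :
    Function.Surjective (resMap w j hw1) := by
  rintro ⟨u, hu⟩
  set n := w.length with hn
  set v : Fin (j + n) → Bool := fun t =>
    if h : t.1 < j then u ⟨t.1, h⟩ else w.get ⟨t.1 - j, by omega⟩ with hv
  have hvlast : ∀ l : Fin n, v ⟨j + l.1, by omega⟩ = w.get l := by
    intro l
    simp only [hv]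
    rw [dif_neg (by omega)]
    congr 1
    apply Fin.ext; simp only [Fin.val_mk]; omega
  have hocclast : OccursEndingAt w (padFalse v) (j + n) := by
    refine ⟨Nat.le_add_left n j, fun l => ?_⟩
    have hidx : j + n - n + (l : ℕ) = j + l.1 := by omega
    rw [hidx, padFalse_lt v (by omega : j + l.1 < j + n)]
    exact hvlast l
  have hfirst : FirstOccurEndsAt w (padFalse v) (j + n) := by
    refine ⟨hocclast, fun k hk hocc => ?_⟩
    rcases le_or_gt k j with hkj | hkj
    · -- occurrence inside u
      refine hu k hkj ?_
      exact (occ_restrict v u (Nat.le_add_right j n)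
        (fun t ht => by simp only [hv]; rw [dif_pos ht]) hkj).mp hocc
    · -- overlapping occurrence, contradicts non-self-overlap
      have hnk : n ≤ k := hocc.1
      set d : ℕ := j + n - k with hd
      have hd1 : 1 ≤ d := by omega
      have hdn : d < n := by omega
      refine hnso d hd1 (by omega) ?_
      apply List.ext_get
      · simp only [List.length_drop, List.length_take, hn.symm]; omega
      · intro m hm1 hm2
        have hmlt : m < n - d := by simpa [hn.symm] using hm1
        have hdm : d + m < n := by omega
        -- from the occurrence at k, position d+m
        have e := hocc.2 ⟨d + m, hdm⟩
        have hidx : k - n + (d + m) = j + m := by omega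
        rw [hidx, padFalse_lt v (by omega : j + m < j + n)] at e
        have e2 : v ⟨j + m, by omega⟩ = w.get ⟨m, by omega⟩ :=
          hvlast ⟨m, by omega⟩
        rw [e2] at e
        simp only [List.get_eq_getElem, List.getElem_drop, List.getElem_take]
        simpa using e.symm
  refine ⟨⟨v, hfirst⟩, ?_⟩
  apply Subtype.ext
  funext t
  simp only [resMap, hv]
  rw [dif_pos t.2, Fin.eta]

lemma ft_le_noOcc (hw1 : 1 ≤ w.length) : firstTimerCount w (j + w.length) ≤ noOcc w j :=
  Nat.card_le_card_of_injective _ (resMap_inj w j hw1)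

lemma ft_eq_noOcc (hw1 : 1 ≤ w.length)
    (hnso : ∀ d, 1 ≤ d → d ≤ w.length - 1 → List.drop d w ≠ List.take (w.length - d) w) :
    firstTimerCount w (j + w.length) = noOcc w j :=
  Nat.card_eq_of_bijective _ ⟨resMap_inj w j hw1, resMap_surj w j hw1 hnso⟩

end KeyLemma

end EWT

namespace EWT

open Filter

noncomputable def q (w : List Bool) (i : ℕ) : ℝ := (noOcc w i : ℝ) / 2 ^ i

variable {w : List Bool}

lemma q_nonneg (i : ℕ) : 0 ≤ q w i := by unfold q; positivity

lemma p_nonneg (i : ℕ) : 0 ≤ firstTimeProb w i := by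
  unfold firstTimeProb; positivity

lemma q_zero (hw1 : 1 ≤ w.length) : q w 0 = 1 := by
  have : w ≠ [] := fun h => by simp [h] at hw1
  simp [q, noOcc_zero w this]

lemma q_rec (i : ℕ) : q w i = q w (i + 1) + firstTimeProb w (i + 1) := by
  have h := card_rec w i
  unfold q firstTimeProb
  have h2 : ((2 : ℝ)) * noOcc w i = (noOcc w (i+1) : ℝ) + firstTimerCount w (i+1) := by
    exact_mod_cast congrArg (Nat.cast : ℕ → ℝ) h
  rw [← add_div, ← h2, pow_succ]
  field_simp

lemma q_antitone : Antitone (q w) := by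
  refine antitone_nat_of_succ_le fun i => ?_
  have := q_rec (w := w) i
  have := p_nonneg (w := w) (i + 1)
  linarith

lemma sum_p (hw1 : 1 ≤ w.length) (N : ℕ) :
    ∑ i ∈ Finset.range (N + 1), firstTimeProb w i = 1 - q w N := by
  induction N with
  | zero =>
    have h0 : firstTimerCount w 0 = 0 := firstTimerCount_eq_zero w hw1
    simp [firstTimeProb, h0, q_zero hw1]
  | succ N ih =>
    rw [Finset.sum_range_succ, ih]
    have := q_rec (w := w) N
    linarith

lemma q_le_one (hw1 : 1 ≤ w.length) (i : ℕ) : q w i ≤ 1 := by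
  have := q_antitone (w := w) (Nat.zero_le i)
  rwa [q_zero hw1] at this

lemma q_decay (hw1 : 1 ≤ w.length) (i : ℕ) :
    q w (i + w.length) ≤ q w i * ((2 ^ w.length - 1) / 2 ^ w.length) := by
  have h := noOcc_decay w i
  have h2 : (noOcc w (i + w.length) : ℝ) ≤ (noOcc w i : ℝ) * ((2:ℝ) ^ w.length - 1) := by
    have := Nat.one_le_two_pow (n := w.length)
    push_cast [Nat.cast_sub this]
    exact_mod_cast Nat.cast_le.mpr h
  unfold q
  rw [pow_add, div_mul_div_comm]
  exact (div_le_div_iff_of_pos_right (by positivity)).mpr h2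


end EWT

namespace EWT

open Filter

variable {w : List Bool}

/-- geometric bound on `q` -/
lemma q_bound (hw1 : 1 ≤ w.length) (i : ℕ) :
    q w i ≤ ((2 ^ w.length - 1) / 2 ^ w.length : ℝ) ^ (i / w.length) := by
  set n := w.length
  set r : ℝ := ((2 ^ n - 1) / 2 ^ n : ℝ) with hr
  have hr0 : 0 ≤ r := by
    apply div_nonneg _ (by positivity)
    have : (1:ℝ) ≤ 2 ^ n := by exact_mod_cast Nat.one_le_two_pow (n := n)
    linarith
  induction i using Nat.strong_induction_on with
  | _ i ih =>
    rcases Nat.lt_or_ge i n with h | h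
    · rw [Nat.div_eq_of_lt h, pow_zero]
      exact q_le_one hw1 i
    · have hi : i = (i - n) + n := by omega
      have hdiv : i / n = (i - n) / n + 1 := by
        conv_lhs => rw [hi]
        rw [Nat.add_div_right _ (by omega)]
      rw [hdiv, pow_succ]
      calc q w i = q w ((i - n) + n) := by rw [← hi]
        _ ≤ q w (i - n) * r := q_decay hw1 (i - n)
        _ ≤ r ^ ((i - n) / n) * r := by
            apply mul_le_mul_of_nonneg_right _ hr0
            exact ih (i - n) (by omega)

lemma summable_q (hw1 : 1 ≤ w.length) : Summable (q w) := by
  set n := w.length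
  set r : ℝ := ((2 ^ n - 1) / 2 ^ n : ℝ) with hr
  have h2n : (1:ℝ) ≤ 2 ^ n := by exact_mod_cast Nat.one_le_two_pow (n := n)
  have hr0 : 0 ≤ r := by apply div_nonneg _ (by positivity); linarith
  have hr1 : r < 1 := by
    rw [div_lt_one (by positivity)]; linarith
  have key : ∀ K : ℕ, ∑ i ∈ Finset.range (n * K), r ^ (i / n) = n * ∑ k ∈ Finset.range K, r ^ k := by
    intro K
    induction K with
    | zero => simp
    | succ K ih =>
      rw [Nat.mul_succ, Finset.sum_range_add, ih, Finset.sum_range_succ]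
      have : ∀ x ∈ Finset.range n, r ^ ((n * K + x) / n) = r ^ K := by
        intro x hx
        rw [Nat.mul_add_div (by omega), Nat.div_eq_of_lt (Finset.mem_range.mp hx), Nat.add_zero]
      rw [Finset.sum_congr rfl this, Finset.sum_const, Finset.card_range, nsmul_eq_mul]
      ring
  have hgeom : ∀ K : ℕ, ∑ k ∈ Finset.range K, r ^ k ≤ (1 - r)⁻¹ := by
    intro K
    rw [geom_sum_eq (by linarith) K]
    have h1 : (r ^ K - 1) / (r - 1) = (1 - r ^ K) / (1 - r) := by
      rw [div_eq_div_iff (by linarith) (by linarith)]; ring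
    have hK : 0 ≤ r ^ K := pow_nonneg hr0 K
    rw [h1, div_le_iff₀ (by linarith), inv_mul_cancel₀ (by linarith : (1:ℝ) - r ≠ 0)]
    linarith
  apply summable_of_sum_range_le (c := n * (1 - r)⁻¹) (fun i => q_nonneg i)
  intro N
  calc ∑ i ∈ Finset.range N, q w i ≤ ∑ i ∈ Finset.range N, r ^ (i / n) :=
        Finset.sum_le_sum fun i _ => q_bound hw1 i
    _ ≤ ∑ i ∈ Finset.range (n * N), r ^ (i / n) := by
        apply Finset.sum_le_sum_of_subset_of_nonneg
        · exact Finset.range_subset_range.mpr (by nlinarith [hw1])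
        · intro i _ _; positivity
    _ = n * ∑ k ∈ Finset.range N, r ^ k := key N
    _ ≤ n * (1 - r)⁻¹ := by
        apply mul_le_mul_of_nonneg_left (hgeom N) (by positivity)

lemma q_tendsto_zero (hw1 : 1 ≤ w.length) : Tendsto (q w) atTop (nhds 0) :=
  (summable_q hw1).tendsto_atTop_zero

lemma hasSum_p (hw1 : 1 ≤ w.length) : HasSum (firstTimeProb w) 1 := by
  rw [hasSum_iff_tendsto_nat_of_nonneg (fun i => p_nonneg i)]
  rw [← Filter.tendsto_add_atTop_iff_nat 1]
  have : (fun N => ∑ i ∈ Finset.range (N + 1), firstTimeProb w i) = fun N => 1 - q w N := by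
    funext N; exact sum_p hw1 N
  rw [this]
  have := ((q_tendsto_zero hw1).const_sub 1)
  simpa using this

end EWT

namespace EWT

open Filter

variable {w : List Bool}

lemma nq_tendsto_zero (hw1 : 1 ≤ w.length) :
    Tendsto (fun N : ℕ => (N : ℝ) * q w N) atTop (nhds 0) := by
  set n := w.length
  set r : ℝ := ((2 ^ n - 1) / 2 ^ n : ℝ) with hr
  have h2n : (1:ℝ) ≤ 2 ^ n := by exact_mod_cast Nat.one_le_two_pow (n := n)
  have hr0 : 0 ≤ r := by apply div_nonneg _ (by positivity); linarith
  have hr1 : r < 1 := by rw [div_lt_one (by positivity)]; linarith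
  set g : ℕ → ℝ := fun k => (n : ℝ) * ((k : ℝ) * r ^ k) + (n : ℝ) * r ^ k with hg
  have hgt : Tendsto g atTop (nhds 0) := by
    have t1 : Tendsto (fun k : ℕ => (k : ℝ) * r ^ k) atTop (nhds 0) := by
      have hs := (summable_pow_mul_geometric_of_norm_lt_one (R := ℝ) 1
        (by rw [Real.norm_eq_abs, abs_of_nonneg hr0]; exact hr1)).tendsto_atTop_zero
      simpa using hs
    have t2 : Tendsto (fun k : ℕ => r ^ k) atTop (nhds 0) :=
      tendsto_pow_atTop_nhds_zero_of_lt_one hr0 hr1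
    have := (t1.const_mul (n : ℝ)).add (t2.const_mul (n : ℝ))
    simpa using this
  have hdiv : Tendsto (fun N : ℕ => N / n) atTop atTop := by
    rw [tendsto_atTop_atTop]
    intro b
    exact ⟨n * b, fun m hm => (Nat.le_div_iff_mul_le (by omega)).mpr
      (by rw [Nat.mul_comm]; exact hm)⟩
  refine squeeze_zero (fun N => mul_nonneg (Nat.cast_nonneg N) (q_nonneg N))
    (fun N => ?_) (hgt.comp hdiv)
  show (N : ℝ) * q w N ≤ g (N / n)
  have hb1 : q w N ≤ r ^ (N / n) := q_bound hw1 N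
  have hNle : (N : ℝ) ≤ (n : ℝ) * ((N / n : ℕ) : ℝ) + (n : ℝ) := by
    have hmod : N % n < n := Nat.mod_lt N (by omega)
    have h1 : (N : ℝ) = (n : ℝ) * ((N / n : ℕ) : ℝ) + ((N % n : ℕ) : ℝ) := by
      exact_mod_cast (Nat.div_add_mod N n).symm
    have h2 : ((N % n : ℕ) : ℝ) ≤ (n : ℝ) := by exact_mod_cast hmod.le
    linarith
  have hq0 := q_nonneg (w := w) N
  have hrp : (0:ℝ) ≤ r ^ (N / n) := pow_nonneg hr0 _
  calc (N : ℝ) * q w N ≤ (N : ℝ) * r ^ (N / n) := by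
        apply mul_le_mul_of_nonneg_left hb1 (Nat.cast_nonneg N)
    _ ≤ ((n : ℝ) * ((N / n : ℕ) : ℝ) + (n : ℝ)) * r ^ (N / n) :=
        mul_le_mul_of_nonneg_right hNle hrp
    _ = g (N / n) := by rw [hg]; ring

lemma sum_ip (hw1 : 1 ≤ w.length) (N : ℕ) :
    ∑ i ∈ Finset.range (N + 1), (i : ℝ) * firstTimeProb w i =
      ∑ j ∈ Finset.range N, q w j - (N : ℝ) * q w N := by
  induction N with
  | zero => simp
  | succ N ih =>
    rw [Finset.sum_range_succ, ih, Finset.sum_range_succ (f := q w)]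
    have hrec := q_rec (w := w) N
    have : firstTimeProb w (N + 1) = q w N - q w (N + 1) := by linarith
    rw [this]
    push_cast
    ring

lemma expectedWaitTime_eq_tsum_q (hw1 : 1 ≤ w.length) :
    expectedWaitTime w = ∑' j, q w j := by
  have hsq := summable_q hw1
  have htend : Tendsto (fun N : ℕ => ∑ i ∈ Finset.range N, (i : ℝ) * firstTimeProb w i)
      atTop (nhds (∑' j, q w j)) := by
    rw [← Filter.tendsto_add_atTop_iff_nat 1]
    have heq : (fun N : ℕ => ∑ i ∈ Finset.range (N + 1), (i : ℝ) * firstTimeProb w i) =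
        fun N => ∑ j ∈ Finset.range N, q w j - (N : ℝ) * q w N := by
      funext N; exact sum_ip hw1 N
    rw [heq]
    have h1 := hsq.hasSum.tendsto_sum_nat
    have h2 := nq_tendsto_zero hw1
    simpa using h1.sub h2
  have hh : HasSum (fun i : ℕ => (i : ℝ) * firstTimeProb w i) (∑' j, q w j) := by
    rw [hasSum_iff_tendsto_nat_of_nonneg (fun i => mul_nonneg (Nat.cast_nonneg i) (p_nonneg i))]
    exact htend
  exact hh.tsum_eq

lemma tsum_p_shift (hw1 : 1 ≤ w.length) :
    ∑' j : ℕ, firstTimeProb w (j + w.length) = 1 := by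
  have hp := hasSum_p hw1
  have h := Summable.sum_add_tsum_nat_add (f := firstTimeProb w) w.length hp.summable
  rw [hp.tsum_eq] at h
  have hz : ∑ i ∈ Finset.range w.length, firstTimeProb w i = 0 := by
    apply Finset.sum_eq_zero
    intro i hi
    rw [firstTimeProb, firstTimerCount_eq_zero w (Finset.mem_range.mp hi)]
    simp
  linarith [h, hz]

lemma p_shift_le (hw1 : 1 ≤ w.length) (j : ℕ) :
    firstTimeProb w (j + w.length) ≤ ((2:ℝ) ^ w.length)⁻¹ * q w j := by
  have hrw : ((2:ℝ) ^ w.length)⁻¹ * q w j = (noOcc w j : ℝ) / (2 ^ j * 2 ^ w.length) := by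
    rw [q, eq_div_iff (by positivity)]
    field_simp
  rw [firstTimeProb, pow_add, hrw]
  gcongr
  exact_mod_cast ft_le_noOcc w j hw1

lemma p_shift_eq (hw1 : 1 ≤ w.length)
    (hnso : ∀ d, 1 ≤ d → d ≤ w.length - 1 → List.drop d w ≠ List.take (w.length - d) w) (j : ℕ) :
    firstTimeProb w (j + w.length) = ((2:ℝ) ^ w.length)⁻¹ * q w j := by
  have hrw : ((2:ℝ) ^ w.length)⁻¹ * q w j = (noOcc w j : ℝ) / (2 ^ j * 2 ^ w.length) := by
    rw [q, eq_div_iff (by positivity)]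
    field_simp
  rw [firstTimeProb, ft_eq_noOcc w j hw1 hnso, pow_add, hrw]

end EWT

namespace EWT

variable {w : List Bool}

lemma tsum_q_ge (hw1 : 1 ≤ w.length) : (2:ℝ) ^ w.length ≤ ∑' j, q w j := by
  have h2 : 1 ≤ ((2:ℝ) ^ w.length)⁻¹ * ∑' j, q w j := by
    rw [← tsum_mul_left]
    calc (1:ℝ) = ∑' j, firstTimeProb w (j + w.length) := (tsum_p_shift hw1).symm
      _ ≤ ∑' j, ((2:ℝ) ^ w.length)⁻¹ * q w j :=
        Summable.tsum_le_tsum (p_shift_le hw1)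
          ((summable_nat_add_iff w.length).mpr (hasSum_p hw1).summable)
          ((summable_q hw1).mul_left _)
  have hpos : (0:ℝ) < 2 ^ w.length := by positivity
  rw [inv_mul_eq_div, le_div_iff₀ hpos] at h2
  linarith

lemma tsum_q_eq (hw1 : 1 ≤ w.length)
    (hnso : ∀ d, 1 ≤ d → d ≤ w.length - 1 → List.drop d w ≠ List.take (w.length - d) w) :
    ∑' j, q w j = (2:ℝ) ^ w.length := by
  have h2 : 1 = ((2:ℝ) ^ w.length)⁻¹ * ∑' j, q w j := by
    rw [← tsum_mul_left]
    calc (1:ℝ) = ∑' j, firstTimeProb w (j + w.length) := (tsum_p_shift hw1).symm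
      _ = ∑' j, ((2:ℝ) ^ w.length)⁻¹ * q w j := by
        congr 1; funext j; exact p_shift_eq hw1 hnso j
  have hpos : (0:ℝ) < 2 ^ w.length := by positivity
  rw [inv_mul_eq_div, eq_div_iff (ne_of_gt hpos)] at h2
  linarith

end EWT


/-- A non-self-overlapping binary string of length `n` (no nontrivial
autocorrelation: for `1 ≤ i ≤ n - 1` the suffix of length `n - i` differs from
the prefix of length `n - i`) has expected wait time exactly `2^n`, and this is
the minimum expected wait time among all binary strings of length `n`. -/
theorem expectedWaitTime_nonSelfOverlapping (n : ℕ) (w : List Bool)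
    (hw : w.length = n) (hne : w ≠ [])
    (hnso : ∀ i, 1 ≤ i → i ≤ n - 1 → List.drop i w ≠ List.take (w.length - i) w) :
    expectedWaitTime w = 2 ^ n ∧
      ∀ v : List Bool, v.length = n → (2 : ℝ) ^ n ≤ expectedWaitTime v := by
  have hw1 : 1 ≤ w.length := List.length_pos_iff.mpr hne
  constructor
  · rw [EWT.expectedWaitTime_eq_tsum_q hw1, EWT.tsum_q_eq hw1 (by rw [hw]; intro d h1 h2; rw [← hw]; exact hnso d h1 h2), hw]
  · intro v hv
    have hv1 : 1 ≤ v.length := by omega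
    rw [EWT.expectedWaitTime_eq_tsum_q hv1, ← hv]
    exact EWT.tsum_q_ge hv1
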